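/- Let P be a locally finite partially ordered set with a weak rank function r, let κ be a P-kernel in the incidence algebra of P over ℤ[t], and let f, g ∈ 𝓘_{1/2}(P) satisfy \bar f = κ * f and \bar g = g * κ. Then the Z-function Z := g * κ * f satisfies deg(Z x y) ≤ r x y for all x ≤ y and \bar Z = Z; that is, for all x ≤ y, Polynomial.reflect (r x y) (Z x y) = Z x y, so each Z-polynomial Z x y is palindromic with respect to degree r x y. -/

import Mathlib

open Finset Polynomial

/-- The bar involution on the incidence algebra of `P` over `ℤ[t]` relative to a weak rank
function `r`: it sends `f` to the function `x y ↦ t^(r x y) · (f x y)(t⁻¹)`, i.e. the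
reflection of `f x y` at degree `r x y`. -/
noncomputable def IncidenceAlgebra.bar {P : Type*} [PartialOrder P] [LocallyFiniteOrder P]
    (r : P → P → ℕ) (f : IncidenceAlgebra (Polynomial ℤ) P) :
    IncidenceAlgebra (Polynomial ℤ) P :=
  ⟨fun x y => (f x y).reflect (r x y), fun x y h => by
    try simp only []
    rw [IncidenceAlgebra.apply_eq_zero_of_not_le h, Polynomial.reflect_zero]⟩

lemma IncidenceAlgebra.bar_apply {P : Type*} [PartialOrder P] [LocallyFiniteOrder P]
    (r : P → P → ℕ) (f : IncidenceAlgebra (Polynomial ℤ) P) (x y : P) :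
    IncidenceAlgebra.bar r f x y = (f x y).reflect (r x y) := rfl

lemma deg_mul_le {P : Type*} [PartialOrder P] [LocallyFiniteOrder P] [DecidableEq P]
    (r : P → P → ℕ) (hr_add : ∀ x y z : P, x ≤ y → y ≤ z → r x y + r y z = r x z)
    (a b : IncidenceAlgebra (Polynomial ℤ) P)
    (ha : ∀ x y : P, x ≤ y → (a x y).natDegree ≤ r x y)
    (hb : ∀ x y : P, x ≤ y → (b x y).natDegree ≤ r x y) :
    ∀ x y : P, x ≤ y → ((a * b) x y).natDegree ≤ r x y := by
  intro x y hxy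
  rw [IncidenceAlgebra.mul_apply]
  refine Polynomial.natDegree_sum_le_of_forall_le _ _ fun z hz => ?_
  rw [Finset.mem_Icc] at hz
  calc (a x z * b z y).natDegree ≤ (a x z).natDegree + (b z y).natDegree :=
        Polynomial.natDegree_mul_le
    _ ≤ r x z + r z y := add_le_add (ha _ _ hz.1) (hb _ _ hz.2)
    _ = r x y := hr_add _ _ _ hz.1 hz.2

lemma my_reflect_sum {ι : Type*} (s : Finset ι) (p : ι → Polynomial ℤ) (N : ℕ) :
    Polynomial.reflect N (∑ i ∈ s, p i) = ∑ i ∈ s, Polynomial.reflect N (p i) := by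
  classical
  induction s using Finset.induction_on with
  | empty => simp
  | insert a s h ih => rw [Finset.sum_insert h, Finset.sum_insert h, Polynomial.reflect_add, ih]

lemma bar_mul {P : Type*} [PartialOrder P] [LocallyFiniteOrder P] [DecidableEq P]
    (r : P → P → ℕ) (hr_add : ∀ x y z : P, x ≤ y → y ≤ z → r x y + r y z = r x z)
    (a b : IncidenceAlgebra (Polynomial ℤ) P)
    (ha : ∀ x y : P, x ≤ y → (a x y).natDegree ≤ r x y)
    (hb : ∀ x y : P, x ≤ y → (b x y).natDegree ≤ r x y) :
    IncidenceAlgebra.bar r (a * b) = IncidenceAlgebra.bar r a * IncidenceAlgebra.bar r b := by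
  refine IncidenceAlgebra.ext fun x y hxy => ?_
  rw [IncidenceAlgebra.bar_apply, IncidenceAlgebra.mul_apply, IncidenceAlgebra.mul_apply]
  rw [my_reflect_sum (Finset.Icc x y) (fun z => a x z * b z y)]
  refine Finset.sum_congr rfl fun z hz => ?_
  rw [Finset.mem_Icc] at hz
  rw [← hr_add x z y hz.1 hz.2, Polynomial.reflect_mul _ _ (ha _ _ hz.1) (hb _ _ hz.2)]
  rfl

/-- Let `κ` be a `P`-kernel with right KLS-function `f` and left KLS-function `g`
(elements of `𝓘_{1/2}(P)` satisfying `f̄ = κ * f` and `ḡ = g * κ`).  Then the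
`Z`-function `Z := g * κ * f` satisfies `deg (Z x y) ≤ r x y` for all `x ≤ y` and
`Z̄ = Z`: each `Z`-polynomial is palindromic with respect to degree `r x y`. -/
theorem Z_function_palindromic {P : Type*} [PartialOrder P]
    [LocallyFiniteOrder P] [DecidableEq P] (r : P → P → ℕ)
    (hr_pos : ∀ x y : P, x < y → 0 < r x y)
    (hr_add : ∀ x y z : P, x ≤ y → y ≤ z → r x y + r y z = r x z)
    (κ : IncidenceAlgebra (Polynomial ℤ) P)
    (hκ_deg : ∀ x y : P, x ≤ y → (κ x y).natDegree ≤ r x y)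
    (hκ_diag : ∀ x : P, κ x x = 1)
    (hκ_kernel : IncidenceAlgebra.bar r κ * κ = 1)
    (f g : IncidenceAlgebra (Polynomial ℤ) P)
    (hf_diag : ∀ x : P, f x x = 1)
    (hf_half : ∀ x y : P, x < y → f x y = 0 ∨ 2 * (f x y).natDegree < r x y)
    (hf_bar : IncidenceAlgebra.bar r f = κ * f)
    (hg_diag : ∀ x : P, g x x = 1)
    (hg_half : ∀ x y : P, x < y → g x y = 0 ∨ 2 * (g x y).natDegree < r x y)
    (hg_bar : IncidenceAlgebra.bar r g = g * κ) :
    (∀ x y : P, x ≤ y → ((g * κ * f) x y).natDegree ≤ r x y) ∧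
      ∀ x y : P, x ≤ y →
        ((g * κ * f) x y).reflect (r x y) = (g * κ * f) x y := by
  have hf_deg : ∀ x y : P, x ≤ y → (f x y).natDegree ≤ r x y := by
    intro x y hxy
    rcases eq_or_lt_of_le hxy with rfl | h
    · simp [hf_diag]
    · rcases hf_half x y h with h0 | h0
      · simp [h0]
      · omega
  have hg_deg : ∀ x y : P, x ≤ y → (g x y).natDegree ≤ r x y := by
    intro x y hxy
    rcases eq_or_lt_of_le hxy with rfl | h
    · simp [hg_diag]
    · rcases hg_half x y h with h0 | h0
      · simp [h0]
      · omega
  have hgκ := deg_mul_le r hr_add g κ hg_deg hκ_deg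
  have hZ_deg := deg_mul_le r hr_add (g * κ) f hgκ hf_deg
  have hbarZ : IncidenceAlgebra.bar r (g * κ * f) = g * κ * f := by
    rw [bar_mul r hr_add (g * κ) f hgκ hf_deg, bar_mul r hr_add g κ hg_deg hκ_deg,
      hf_bar, hg_bar]
    calc g * κ * IncidenceAlgebra.bar r κ * (κ * f)
        = g * (κ * (IncidenceAlgebra.bar r κ * κ)) * f := by
          simp only [mul_assoc]
      _ = g * κ * f := by rw [hκ_kernel, mul_one]
  refine ⟨hZ_deg, fun x y hxy => ?_⟩
  rw [← IncidenceAlgebra.bar_apply r, hbarZ]
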